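/- Let X be a length space, I ⊆ ℝ a closed nondegenerate interval, and f : I → ℝ measurable with 0 < f_min ≤ f(t) ≤ f_max < ∞ for all t ∈ I. Then for all p, q ∈ I × X: min{1, f_min} · d̂_σ(p,q) ≤ d̂_f(p,q) ≤ max{1, f_max} · d̂_σ(p,q), where d̂_f is the null distance of the warped product I ×_f X and d̂_σ is the null distance of the Lorentzian product I × X (warping function f ≡ 1). -/

import Mathlib

open MeasureTheory

/-- Causal relation of the warped product `I ×_f X`; for `f ≡ 1` it is the causal relation
of the Lorentzian product: `(s,x) ≼ (t,y)` iff `s ≤ t` and `d(x,y) ≤ t − s`. -/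
def WPCausal {X : Type*} [MetricSpace X] (f : ℝ → ℝ) (p q : ℝ × X) : Prop :=
  p.1 ≤ q.1 ∧
    ENNReal.ofReal (dist p.2 q.2) ≤ ∫⁻ u in Set.Ioc p.1 q.1, ENNReal.ofReal ((f u)⁻¹)

/-- `σ` is a piecewise causal chain with `n+1` segments from `p` to `q` inside `I × X`. -/
def WPChain {X : Type*} [MetricSpace X] (I : Set ℝ) (f : ℝ → ℝ) (p q : ℝ × X) (n : ℕ)
    (σ : ℕ → ℝ × X) : Prop :=
  σ 0 = p ∧ σ (n + 1) = q ∧ (∀ i ≤ n + 1, (σ i).1 ∈ I) ∧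
    ∀ i ≤ n, WPCausal f (σ i) (σ (i + 1)) ∨ WPCausal f (σ (i + 1)) (σ i)

/-- The null distance of the warped product `I ×_f X`. -/
noncomputable def nullDist {X : Type*} [MetricSpace X] (I : Set ℝ) (f : ℝ → ℝ)
    (p q : ℝ × X) : ℝ :=
  sInf { r | ∃ n σ, WPChain I f p q n σ ∧
    r = ∑ i ∈ Finset.range (n + 1), |(σ (i + 1)).1 - (σ i).1| }

section Aux
variable {X : Type*} [MetricSpace X]

def NDSet (I : Set ℝ) (f : ℝ → ℝ) (p q : ℝ × X) : Set ℝ :=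
  { r | ∃ n σ, WPChain I f p q n σ ∧
    r = ∑ i ∈ Finset.range (n + 1), |(σ (i + 1)).1 - (σ i).1| }

lemma nullDist_eq (I : Set ℝ) (f : ℝ → ℝ) (p q : ℝ × X) :
    nullDist I f p q = sInf (NDSet I f p q) := rfl

lemma ndset_nonneg {I : Set ℝ} {f : ℝ → ℝ} {p q : ℝ × X} {r : ℝ}
    (h : r ∈ NDSet I f p q) : 0 ≤ r := by
  obtain ⟨n, σ, -, rfl⟩ := h
  exact Finset.sum_nonneg fun i _ => abs_nonneg _

lemma ndset_bdd (I : Set ℝ) (f : ℝ → ℝ) (p q : ℝ × X) : BddBelow (NDSet I f p q) :=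
  ⟨0, fun r hr => ndset_nonneg hr⟩

lemma wpcausal_const {c : ℝ} (hc : 0 < c) (p q : ℝ × X) :
    WPCausal (fun _ => c) p q ↔ p.1 ≤ q.1 ∧ c * dist p.2 q.2 ≤ q.1 - p.1 := by
  unfold WPCausal
  rw [setLIntegral_const, Real.volume_Ioc,
    ← ENNReal.ofReal_mul (by positivity : (0:ℝ) ≤ c⁻¹)]
  constructor
  · rintro ⟨h1, h2⟩
    refine ⟨h1, ?_⟩
    have h3 : dist p.2 q.2 ≤ c⁻¹ * (q.1 - p.1) :=
      (ENNReal.ofReal_le_ofReal_iff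
        (mul_nonneg (inv_nonneg.2 hc.le) (sub_nonneg.2 h1))).1 h2
    calc c * dist p.2 q.2 ≤ c * (c⁻¹ * (q.1 - p.1)) := by nlinarith
      _ = q.1 - p.1 := by field_simp
  · rintro ⟨h1, h2⟩
    refine ⟨h1, ENNReal.ofReal_le_ofReal ?_⟩
    rw [le_inv_mul_iff₀ hc]
    linarith

lemma ndset_rev {I : Set ℝ} {f : ℝ → ℝ} {p q : ℝ × X} {r : ℝ}
    (h : r ∈ NDSet I f p q) : r ∈ NDSet I f q p := by
  obtain ⟨n, σ, ⟨h0, h1, hI, hc⟩, rfl⟩ := h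
  refine ⟨n, fun i => σ (n + 1 - i), ⟨by simpa, by simpa, fun i hi => hI _ (by omega), ?_⟩, ?_⟩
  · intro i hi
    have e1 : n + 1 - i = (n - i) + 1 := by omega
    have e2 : n + 1 - (i + 1) = n - i := by omega
    simp only [e1, e2]
    exact (hc (n - i) (by omega)).symm
  · rw [← Finset.sum_range_reflect]
    apply Finset.sum_congr rfl
    intro i hi
    simp only [Finset.mem_range] at hi
    simp only [show n + 1 - 1 - i + 1 = n - i + 1 from by omega,
      show n + 1 - 1 - i = n - i from by omega,
      show n + 1 - (i + 1) = n - i from by omega,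
      show n + 1 - i = n - i + 1 from by omega]
    rw [abs_sub_comm]

lemma chain_dist_le {I : Set ℝ} {c : ℝ} (hc : 0 < c) {p q : ℝ × X} {n : ℕ} {σ : ℕ → ℝ × X}
    (h : WPChain I (fun _ => c) p q n σ) :
    max |q.1 - p.1| (c * dist p.2 q.2) ≤
      ∑ i ∈ Finset.range (n + 1), |(σ (i + 1)).1 - (σ i).1| := by
  obtain ⟨h0, h1, hI, hcs⟩ := h
  have kseg : ∀ i ≤ n, c * dist (σ i).2 (σ (i + 1)).2 ≤ |(σ (i + 1)).1 - (σ i).1| := by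
    intro i hi
    rcases hcs i hi with hC | hC <;> rw [wpcausal_const hc] at hC
    · calc c * dist (σ i).2 (σ (i + 1)).2 ≤ (σ (i+1)).1 - (σ i).1 := hC.2
        _ ≤ |(σ (i + 1)).1 - (σ i).1| := le_abs_self _
    · rw [dist_comm, abs_sub_comm]
      exact hC.2.trans (le_abs_self _)
  refine max_le ?_ ?_
  · rw [← h0, ← h1, abs_le]
    have := Finset.sum_range_sub (fun i => (σ i).1) (n + 1)
    constructor
    · have : -(∑ i ∈ Finset.range (n + 1), |(σ (i + 1)).1 - (σ i).1|) ≤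
          ∑ i ∈ Finset.range (n + 1), ((σ (i+1)).1 - (σ i).1) := by
        rw [← Finset.sum_neg_distrib]
        exact Finset.sum_le_sum fun i _ => neg_abs_le _
      rw [Finset.sum_range_sub (fun i => (σ i).1) (n + 1)] at this
      linarith
    · have : ∑ i ∈ Finset.range (n + 1), ((σ (i+1)).1 - (σ i).1) ≤
          ∑ i ∈ Finset.range (n + 1), |(σ (i + 1)).1 - (σ i).1| :=
        Finset.sum_le_sum fun i _ => le_abs_self _
      rw [Finset.sum_range_sub (fun i => (σ i).1) (n + 1)] at this
      linarith
  · rw [← h0, ← h1]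
    calc c * dist (σ 0).2 (σ (n + 1)).2
        ≤ c * ∑ i ∈ Finset.range (n + 1), dist (σ i).2 (σ (i + 1)).2 := by
          have := dist_le_range_sum_dist (fun i => (σ i).2) (n + 1)
          nlinarith [this]
      _ = ∑ i ∈ Finset.range (n + 1), c * dist (σ i).2 (σ (i + 1)).2 := by
          rw [Finset.mul_sum]
      _ ≤ _ := Finset.sum_le_sum fun i hi => kseg i (by simpa using Nat.lt_succ_iff.mp (Finset.mem_range.mp hi))

end Aux

section B
variable {X : Type*} [MetricSpace X]

lemma subdiv (hX : ∀ x y : X, ∀ ε : ℝ, 0 < ε →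
      ∃ z : X, max (dist x z) (dist z y) ≤ dist x y / 2 + ε) :
    ∀ (N : ℕ) (x y : X) (ε : ℝ), 0 < ε → ∃ z : ℕ → X, z 0 = x ∧ z (2 ^ N) = y ∧
      ∀ j < 2 ^ N, dist (z j) (z (j + 1)) ≤ dist x y / 2 ^ N + ε := by
  intro N
  induction N with
  | zero =>
    intro x y ε hε
    refine ⟨fun j => if j = 0 then x else y, rfl, rfl, ?_⟩
    intro j hj
    interval_cases j
    simp
    linarith [dist_nonneg (x := x) (y := y)]
  | succ N ih =>
    intro x y ε hε
    obtain ⟨w, hw⟩ := hX x y (2 ^ N * ε / 2) (by positivity)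
    obtain ⟨z₁, hz10, hz11, hz1⟩ := ih x w (ε / 2) (by positivity)
    obtain ⟨z₂, hz20, hz21, hz2⟩ := ih w y (ε / 2) (by positivity)
    refine ⟨fun j => if j < 2 ^ N then z₁ j else z₂ (j - 2 ^ N), ?_, ?_, ?_⟩
    · simp only [if_pos (Nat.two_pow_pos N : 0 < 2 ^ N), hz10]
    · simp only [if_neg (by rw [pow_succ]; omega : ¬ (2 ^ (N + 1) < 2 ^ N))]
      rw [show 2 ^ (N + 1) - 2 ^ N = 2 ^ N from by rw [pow_succ]; omega, hz21]
    · intro j hj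
      have hd1 : dist x w ≤ dist x y / 2 + 2 ^ N * ε / 2 := le_trans (le_max_left _ _) hw
      have hd2 : dist w y ≤ dist x y / 2 + 2 ^ N * ε / 2 := le_trans (le_max_right _ _) hw
      have key : ∀ d' : ℝ, d' ≤ dist x y / 2 + 2 ^ N * ε / 2 →
          d' / 2 ^ N + ε / 2 ≤ dist x y / 2 ^ (N + 1) + ε := by
        intro d' hd'
        have h2 : (0:ℝ) < 2 ^ N := by positivity
        rw [pow_succ]
        have e : (dist x y / 2 + 2 ^ N * ε / 2) / 2 ^ N = dist x y / (2 ^ N * 2) + ε / 2 := by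
          field_simp
        have h3 : d' / 2 ^ N ≤ (dist x y / 2 + 2 ^ N * ε / 2) / 2 ^ N := by gcongr
        rw [e] at h3
        linarith
      by_cases h1 : j + 1 < 2 ^ N
      · have h2 : j < 2 ^ N := by omega
        simp only [if_pos h1, if_pos h2]
        exact le_trans (hz1 j h2) (key _ hd1)
      · by_cases h2 : j < 2 ^ N
        · -- j + 1 = 2 ^ N
          have h3 : j + 1 = 2 ^ N := by omega
          simp only [if_pos h2, if_neg h1]
          rw [h3, Nat.sub_self, hz20, ← hz11, ← h3]
          exact le_trans (hz1 j h2) (key _ hd1)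
        · simp only [if_neg h1, if_neg h2, if_neg (show ¬ j + 1 < 2 ^ N by omega)]
          have h3 : j + 1 - 2 ^ N = (j - 2 ^ N) + 1 := by omega
          rw [h3]
          have h4 : j - 2 ^ N < 2 ^ N := by
            have : j < 2 ^ (N + 1) := hj
            rw [pow_succ] at this; omega
          exact le_trans (hz2 _ h4) (key _ hd2)

lemma room {I : Set ℝ} (hIc : I.OrdConnected) {a b : ℝ} (ha : a ∈ I) (hb : b ∈ I)
    (hab : a < b) {u : ℝ} (hu : u ∈ I) {v : ℝ} (hv : 0 ≤ v) (hv2 : v ≤ (b - a) / 2) :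
    u + v ∈ I ∨ u - v ∈ I := by
  by_cases h : u + v ≤ b
  · left
    exact hIc.out hu hb ⟨by linarith, h⟩
  · right
    exact hIc.out ha hu ⟨by linarith, by linarith⟩
end B

section C
variable {X : Type*} [MetricSpace X]

set_option maxHeartbeats 1000000 in
lemma ub_le {I : Set ℝ} (hIc : I.OrdConnected) {a b : ℝ} (ha : a ∈ I) (hb : b ∈ I)
    (hab : a < b)
    (hX : ∀ x y : X, ∀ ε : ℝ, 0 < ε →
      ∃ z : X, max (dist x z) (dist z y) ≤ dist x y / 2 + ε)
    {c : ℝ} (hc : 0 < c) (p q : ℝ × X) (hp : p.1 ∈ I) (hq : q.1 ∈ I)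
    (hst : p.1 ≤ q.1) {ε : ℝ} (hε : 0 < ε) :
    ∃ r ∈ NDSet I (fun _ => c) p q, r ≤ max (q.1 - p.1) (c * dist p.2 q.2) + ε := by
  classical
  set T : ℝ := q.1 - p.1 with hT
  set d : ℝ := dist p.2 q.2 with hd
  have hT0 : 0 ≤ T := by simp [hT]; linarith
  have hd0 : 0 ≤ d := dist_nonneg
  set h₀ : ℝ := (b - a) / 2 with hh₀
  have hh₀0 : 0 < h₀ := by simp [hh₀]; linarith
  set m₀ : ℝ := min (h₀ / 2) (ε / 8) with hm₀
  have hm₀0 : 0 < m₀ := by positivity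
  obtain ⟨N, hN⟩ := pow_unbounded_of_one_lt (R := ℝ) (c * d / m₀) one_lt_two
  set k : ℕ := 2 ^ N with hk
  have hk0 : 0 < k := Nat.two_pow_pos N
  have hkR : (0:ℝ) < (k:ℝ) := Nat.cast_pos.mpr hk0
  have hkm : c * d / k < m₀ := by
    rw [div_lt_iff₀ hkR]
    rw [div_lt_iff₀ hm₀0] at hN
    calc c * d < 2 ^ N * m₀ := hN
      _ = m₀ * k := by rw [hk]; push_cast; ring
  set ε₁ : ℝ := min (h₀ / (2 * c)) (ε / (8 * c * k)) with hε₁def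
  have hε₁0 : 0 < ε₁ := by positivity
  set δ : ℝ := d / k + ε₁ with hδdef
  have hδ0 : 0 < δ := by positivity
  have hcδ0 : 0 < c * δ := by positivity
  have hcd1 : c * (d / k) < m₀ := by rw [mul_div_assoc] at hkm; exact hkm
  have hcε₁ : c * ε₁ ≤ h₀ / 2 := by
    have : ε₁ ≤ h₀ / (2 * c) := min_le_left _ _
    calc c * ε₁ ≤ c * (h₀ / (2 * c)) := by nlinarith
      _ = h₀ / 2 := by field_simp
  have hcε₁' : (k:ℝ) * (c * ε₁) ≤ ε / 8 := by
    have h1 : ε₁ ≤ ε / (8 * c * k) := min_le_right _ _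
    calc (k:ℝ) * (c * ε₁) ≤ (k:ℝ) * (c * (ε / (8 * c * k))) := by gcongr
      _ = ε / 8 := by field_simp
  have hcδh : c * δ ≤ h₀ := by
    have : m₀ ≤ h₀ / 2 := min_le_left _ _
    calc c * δ = c * (d / k) + c * ε₁ := by rw [hδdef]; ring
      _ ≤ h₀ / 2 + h₀ / 2 := by linarith
      _ = h₀ := by ring
  have hcδε : c * δ ≤ ε / 4 := by
    have h1 : m₀ ≤ ε / 8 := min_le_right _ _
    have h2 : c * ε₁ ≤ ε / 8 := by
      have := hcε₁'
      have hk1 : (1:ℝ) ≤ (k:ℝ) := by exact_mod_cast hk0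
      nlinarith [hcδ0, hε₁0, mul_pos hc hε₁0]
    calc c * δ = c * (d / k) + c * ε₁ := by rw [hδdef]; ring
      _ ≤ ε / 8 + ε / 8 := by linarith
      _ = ε / 4 := by ring
  obtain ⟨z, hz0, hzk, hz⟩ := subdiv hX N p.2 q.2 ε₁ hε₁0
  have hδ' : δ = dist p.2 q.2 / 2 ^ N + ε₁ := by
    rw [hδdef, hd, hk]; push_cast; ring
  have hzδ : ∀ j < k, dist (z j) (z (j + 1)) ≤ δ := by
    intro j hj
    rw [hδ']
    exact hz j hj
  set r : ℕ := min k ⌊T / (c * δ)⌋₊ with hrdef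
  have hrk : r ≤ k := min_le_left _ _
  have hrT : (r : ℝ) * (c * δ) ≤ T := by
    have h1 : (r : ℝ) ≤ ⌊T / (c * δ)⌋₊ := by exact_mod_cast min_le_right k _
    have h2 : (⌊T / (c * δ)⌋₊ : ℝ) ≤ T / (c * δ) := Nat.floor_le (by positivity)
    calc (r:ℝ) * (c * δ) ≤ T / (c * δ) * (c * δ) :=
          mul_le_mul_of_nonneg_right (h1.trans h2) hcδ0.le
      _ = T := by field_simp
  have hzr : dist p.2 (z r) ≤ r * δ := by
    rw [← hz0]
    calc dist (z 0) (z r) ≤ ∑ i ∈ Finset.range r, dist (z i) (z (i + 1)) :=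
          dist_le_range_sum_dist z r
      _ ≤ ∑ _i ∈ Finset.range r, δ :=
          Finset.sum_le_sum fun i hi => hzδ i (lt_of_lt_of_le (Finset.mem_range.mp hi) hrk)
      _ = r * δ := by rw [Finset.sum_const, Finset.card_range, nsmul_eq_mul]
  set m : ℕ := k - r with hmdef
  set η : ℝ := if q.1 + c * δ ∈ I then c * δ else -(c * δ) with hηdef
  have hηabs : |η| = c * δ := by
    rw [hηdef]; split <;> simp [abs_of_nonneg hcδ0.le, abs_of_nonpos, hcδ0.le]
  have hηI : q.1 + η ∈ I := by
    rw [hηdef]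
    split
    · assumption
    · rcases room hIc ha hb hab hq hcδ0.le (by rw [hh₀] at hcδh; exact hcδh) with h | h
      · exact absurd h (by assumption)
      · rw [show q.1 + -(c * δ) = q.1 - c * δ from by ring]; exact h
  set off : ℕ → ℝ := fun i => if 2 ∣ i then η else 0 with hoffdef
  have hoffI : ∀ i, q.1 + off i ∈ I := by
    intro i
    rw [hoffdef]
    dsimp only
    split
    · exact hηI
    · simpa using hq
  have hoffabs : ∀ i, |off i| ≤ c * δ := by
    intro i
    rw [hoffdef]
    dsimp only
    split
    · exact le_of_eq hηabs
    · simpa using hcδ0.le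
  have hoffalt : ∀ i, |off (i + 1) - off i| = c * δ := by
    intro i
    rcases Nat.even_or_odd i with he | ho
    · have hi : i % 2 = 0 := Nat.even_iff.mp he
      have h1 : off i = η := by simp only [hoffdef]; rw [if_pos (by omega)]
      have h2 : off (i + 1) = 0 := by simp only [hoffdef]; rw [if_neg (by omega)]
      rw [h1, h2, zero_sub, abs_neg, hηabs]
    · have hi : i % 2 = 1 := Nat.odd_iff.mp ho
      have h1 : off i = 0 := by simp only [hoffdef]; rw [if_neg (by omega)]
      have h2 : off (i + 1) = η := by simp only [hoffdef]; rw [if_pos (by omega)]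
      rw [h1, h2, sub_zero, hηabs]
  set σ : ℕ → ℝ × X := fun i =>
    if i = 0 then p else if i ≤ m + 1 then (q.1 + off i, z (r + i - 1)) else q with hσdef
  have hσ0 : σ 0 = p := by simp [hσdef]
  have hσmid : ∀ i, 1 ≤ i → i ≤ m + 1 → σ i = (q.1 + off i, z (r + i - 1)) := by
    intro i h1 h2
    simp only [hσdef]
    rw [if_neg (by omega), if_pos h2]
  have hσlast : ∀ i, m + 1 < i → σ i = q := by
    intro i h1
    simp only [hσdef]
    rw [if_neg (by omega), if_neg (by omega)]
  have helper : ∀ P Q : ℝ × X, c * dist P.2 Q.2 ≤ |Q.1 - P.1| →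
      (WPCausal (fun _ => c) P Q ∨ WPCausal (fun _ => c) Q P) := by
    intro P Q h
    rcases le_total P.1 Q.1 with h1 | h1
    · left
      rw [wpcausal_const hc]
      exact ⟨h1, by rwa [abs_of_nonneg (by linarith)] at h⟩
    · right
      rw [wpcausal_const hc]
      refine ⟨h1, ?_⟩
      rw [dist_comm]
      rwa [abs_of_nonpos (by linarith), neg_sub] at h
  have hoff1 : off 1 = 0 := by simp only [hoffdef]; rw [if_neg (by omega)]
  have hzk' : z k = q.2 := hzk
  have hchain : WPChain I (fun _ => c) p q (m + 1) σ := by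
    refine ⟨hσ0, hσlast (m + 2) (by omega), ?_, ?_⟩
    · intro i hi
      by_cases h0 : i = 0
      · rw [h0, hσ0]; exact hp
      · by_cases h1 : i ≤ m + 1
        · rw [hσmid i (by omega) h1]; exact hoffI i
        · rw [hσlast i (by omega)]; exact hq
    · intro i hi
      by_cases h0 : i = 0
      · subst h0
        rw [hσ0, hσmid 1 le_rfl (by omega)]
        apply helper
        rw [show r + 1 - 1 = r from by omega]
        show c * dist p.2 (z r) ≤ |q.1 + off 1 - p.1|
        rw [hoff1, add_zero, abs_of_nonneg (by linarith : (0:ℝ) ≤ q.1 - p.1)]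
        calc c * dist p.2 (z r) ≤ c * ((r:ℝ) * δ) :=
              mul_le_mul_of_nonneg_left hzr hc.le
          _ = (r:ℝ) * (c * δ) := by ring
          _ ≤ T := hrT
          _ = q.1 - p.1 := hT
      · by_cases h1 : i ≤ m
        · rw [hσmid i (by omega) (by omega), hσmid (i + 1) (by omega) (by omega)]
          apply helper
          rw [show r + (i + 1) - 1 = (r + i - 1) + 1 from by omega]
          show c * dist (z (r + i - 1)) (z (r + i - 1 + 1)) ≤ |q.1 + off (i + 1) - (q.1 + off i)|
          rw [show q.1 + off (i + 1) - (q.1 + off i) = off (i + 1) - off i from by ring,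
            hoffalt i]
          have hlt : r + i - 1 < k := by omega
          have := mul_le_mul_of_nonneg_left (hzδ (r + i - 1) hlt) hc.le
          linarith
        · have hi' : i = m + 1 := by omega
          subst hi'
          rw [hσmid (m + 1) (by omega) le_rfl, hσlast (m + 2) (by omega)]
          apply helper
          rw [show r + (m + 1) - 1 = k from by omega, hzk']
          show c * dist q.2 q.2 ≤ |q.1 - (q.1 + off (m + 1))|
          rw [dist_self, mul_zero]
          exact abs_nonneg _
  refine ⟨_, ⟨m + 1, σ, hchain, rfl⟩, ?_⟩
  have hrcase : r = k ∨ r = ⌊T / (c * δ)⌋₊ := by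
    rw [hrdef]
    rcases le_total k ⌊T / (c * δ)⌋₊ with h | h
    · exact Or.inl (min_eq_left h)
    · exact Or.inr (min_eq_right h)
  have hkne : (k:ℝ) ≠ 0 := ne_of_gt hkR
  clear_value T d h₀ m₀ k ε₁ δ r m η off σ
  have hg0 : |(σ (0 + 1)).1 - (σ 0).1| = T := by
    rw [hσ0, hσmid 1 le_rfl (by omega)]
    show |(q.1 + off 1) - p.1| = T
    rw [hoff1, add_zero, abs_of_nonneg (by linarith : (0:ℝ) ≤ q.1 - p.1)]
    exact hT.symm
  have hgmid : ∀ i, 1 ≤ i → i ≤ m → |(σ (i + 1)).1 - (σ i).1| = c * δ := by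
    intro i h1 h2
    rw [hσmid i h1 (by omega), hσmid (i + 1) (by omega) (by omega)]
    show |(q.1 + off (i + 1)) - (q.1 + off i)| = c * δ
    rw [show q.1 + off (i + 1) - (q.1 + off i) = off (i + 1) - off i from by ring, hoffalt i]
  have hglast : |(σ (m + 1 + 1)).1 - (σ (m + 1)).1| ≤ c * δ := by
    rw [hσlast (m + 2) (by omega), hσmid (m + 1) (by omega) le_rfl]
    show |q.1 - (q.1 + off (m + 1))| ≤ c * δ
    rw [show q.1 - (q.1 + off (m + 1)) = -(off (m + 1)) from by ring, abs_neg]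
    exact hoffabs _
  have hsum : ∑ i ∈ Finset.range (m + 1 + 1), |(σ (i + 1)).1 - (σ i).1|
      ≤ T + (m:ℝ) * (c * δ) + c * δ := by
    rw [Finset.sum_range_succ, Finset.sum_range_succ']
    have h1 : ∑ i ∈ Finset.range m, |(σ (i + 1 + 1)).1 - (σ (i + 1)).1| = (m:ℝ) * (c * δ) := by
      calc ∑ i ∈ Finset.range m, |(σ (i + 1 + 1)).1 - (σ (i + 1)).1|
          = ∑ _i ∈ Finset.range m, c * δ := Finset.sum_congr rfl fun i hi =>
            hgmid (i + 1) (by omega) (by have := Finset.mem_range.mp hi; omega)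
        _ = (m:ℝ) * (c * δ) := by rw [Finset.sum_const, Finset.card_range, nsmul_eq_mul]
    linarith [hg0, hglast, h1]
  clear hσdef hoffdef hηdef hchain helper hσmid hσlast hoffI hoffabs hoffalt hg0 hglast hgmid
  rcases Nat.eq_zero_or_pos m with hm0 | hm1
  · have hmc : ((m:ℕ):ℝ) = 0 := by rw [hm0]; norm_num
    have hTmax : T ≤ max T (c * d) := le_max_left _ _
    calc ∑ i ∈ Finset.range (m + 1 + 1), |(σ (i + 1)).1 - (σ i).1|
        ≤ T + (m:ℝ) * (c * δ) + c * δ := hsum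
      _ = T + c * δ := by rw [hmc]; ring
      _ ≤ max T (c * d) + ε := by linarith [hcδε, hTmax]
  · have hrfloor : r = ⌊T / (c * δ)⌋₊ := by
      rcases hrcase with h | h
      · omega
      · exact h
    have hTlt : T < ((r:ℝ) + 1) * (c * δ) := by
      have h2 := Nat.lt_floor_add_one (T / (c * δ))
      rw [← hrfloor] at h2
      calc T = T / (c * δ) * (c * δ) := by field_simp
        _ < ((r:ℝ) + 1) * (c * δ) := by
            apply mul_lt_mul_of_pos_right _ hcδ0
            exact_mod_cast h2
    clear hrfloor hrcase hrdef hkm hN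
    have hmcast : ((m:ℕ):ℝ) = (k:ℝ) - (r:ℝ) := by
      rw [hmdef, Nat.cast_sub hrk]
    have hkcδ : (k:ℝ) * (c * δ) ≤ c * d + ε / 8 := by
      have he : (k:ℝ) * (c * δ) = c * d + (k:ℝ) * (c * ε₁) := by
        rw [hδdef]; field_simp
      rw [he]; linarith [hcε₁']
    have hmb : (m:ℝ) * (c * δ) ≤ c * d - T + ε / 8 + c * δ := by
      rw [hmcast]
      linarith [hTlt, hkcδ]
    have hdmax : c * d ≤ max T (c * d) := le_max_right _ _
    calc ∑ i ∈ Finset.range (m + 1 + 1), |(σ (i + 1)).1 - (σ i).1|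
        ≤ T + (m:ℝ) * (c * δ) + c * δ := hsum
      _ ≤ c * d + ε / 8 + 2 * (c * δ) := by linarith
      _ ≤ max T (c * d) + ε := by linarith [hcδε, hdmax]
end C

section D
variable {X : Type*} [MetricSpace X] {I : Set ℝ} (hIc : I.OrdConnected)
  {f : ℝ → ℝ} (hf : Measurable f) {fmin fmax : ℝ} (hmin : 0 < fmin)
  (hbd : ∀ t ∈ I, fmin ≤ f t ∧ f t ≤ fmax)

include hIc hf hmin hbd in
lemma causal_of_max {p' q' : ℝ × X} (hp' : p'.1 ∈ I) (hq' : q'.1 ∈ I)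
    (h : WPCausal (fun _ => fmax) p' q') : WPCausal f p' q' := by
  obtain ⟨h1, h2⟩ := h
  refine ⟨h1, h2.trans ?_⟩
  refine setLIntegral_mono (hf.inv.ennreal_ofReal) fun u hu => ?_
  have huI : u ∈ I := hIc.out hp' hq' (Set.Ioc_subset_Icc_self hu)
  have h3 : 0 < f u := lt_of_lt_of_le hmin (hbd u huI).1
  exact ENNReal.ofReal_le_ofReal (by
    have := (hbd u huI).2
    exact inv_anti₀ h3 this)

include hIc hmin hbd in
lemma causal_to_min {p' q' : ℝ × X} (hp' : p'.1 ∈ I) (hq' : q'.1 ∈ I)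
    (h : WPCausal f p' q') : WPCausal (fun _ => fmin) p' q' := by
  obtain ⟨h1, h2⟩ := h
  refine ⟨h1, h2.trans ?_⟩
  refine setLIntegral_mono measurable_const fun u hu => ?_
  have huI : u ∈ I := hIc.out hp' hq' (Set.Ioc_subset_Icc_self hu)
  exact ENNReal.ofReal_le_ofReal (inv_anti₀ hmin (hbd u huI).1)

lemma chain_trans {g h : ℝ → ℝ} {p q : ℝ × X} {n : ℕ} {σ : ℕ → ℝ × X}
    (himp : ∀ p' q' : ℝ × X, p'.1 ∈ I → q'.1 ∈ I → WPCausal g p' q' → WPCausal h p' q')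
    (hc : WPChain I g p q n σ) : WPChain I h p q n σ := by
  obtain ⟨h0, h1, hI, hcs⟩ := hc
  refine ⟨h0, h1, hI, fun i hi => ?_⟩
  rcases hcs i hi with hC | hC
  · exact Or.inl (himp _ _ (hI i (by omega)) (hI (i + 1) (by omega)) hC)
  · exact Or.inr (himp _ _ (hI (i + 1) (by omega)) (hI i (by omega)) hC)
end D


/-- for a length space `X`, a closed nondegenerate interval `I` and a
measurable warping function with `0 < fmin ≤ f ≤ fmax` on `I`:
`min{1,fmin}·d̂_σ ≤ d̂_f ≤ max{1,fmax}·d̂_σ` on `I × X`. -/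
theorem stmt7 {X : Type*} [MetricSpace X]
    (hX : ∀ x y : X, ∀ ε : ℝ, 0 < ε →
      ∃ z : X, max (dist x z) (dist z y) ≤ dist x y / 2 + ε)
    (I : Set ℝ) (hIclosed : IsClosed I) (hIc : I.OrdConnected)
    (hInd : ∃ a ∈ I, ∃ b ∈ I, a < b)
    (f : ℝ → ℝ) (hf : Measurable f)
    (fmin fmax : ℝ) (hmin : 0 < fmin)
    (hbd : ∀ t ∈ I, fmin ≤ f t ∧ f t ≤ fmax) :
    ∀ p q : ℝ × X, p.1 ∈ I → q.1 ∈ I →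
      min 1 fmin * nullDist I (fun _ => (1 : ℝ)) p q ≤ nullDist I f p q ∧
      nullDist I f p q ≤ max 1 fmax * nullDist I (fun _ => (1 : ℝ)) p q := by
  obtain ⟨a, ha, b, hb, hab⟩ := hInd
  have hfmax : 0 < fmax := lt_of_lt_of_le hmin ((hbd a ha).1.trans (hbd a ha).2)
  intro p q hp hq
  set T := |q.1 - p.1| with hT
  set d := dist p.2 q.2 with hd
  have hT0 : 0 ≤ T := abs_nonneg _
  have hd0 : 0 ≤ d := dist_nonneg
  -- general upper bound with abs
  have UB : ∀ c : ℝ, 0 < c → ∀ ε : ℝ, 0 < ε →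
      ∃ r ∈ NDSet I (fun _ => c) p q, r ≤ max T (c * d) + ε := by
    intro c hc ε hε
    rcases le_total p.1 q.1 with h | h
    · obtain ⟨r, hr, hrle⟩ := ub_le hIc ha hb hab hX hc p q hp hq h hε
      refine ⟨r, hr, hrle.trans ?_⟩
      rw [hT, hd, abs_of_nonneg (by linarith)]
    · obtain ⟨r, hr, hrle⟩ := ub_le hIc ha hb hab hX hc q p hq hp h hε
      refine ⟨r, ndset_rev hr, hrle.trans ?_⟩
      rw [hT, hd, abs_of_nonpos (by linarith), dist_comm p.2 q.2]
      simp [neg_sub]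
  -- general lower bound
  have LB : ∀ c : ℝ, 0 < c → ∀ r ∈ NDSet I (fun _ => c) p q, max T (c * d) ≤ r := by
    intro c hc r hr
    obtain ⟨n, σ, hch, rfl⟩ := hr
    exact chain_dist_le hc hch
  have hSfmaxSf : ∀ r ∈ NDSet I (fun _ => fmax) p q, r ∈ NDSet I f p q := by
    rintro r ⟨n, σ, hch, rfl⟩
    exact ⟨n, σ, chain_trans (fun p' q' hp' hq' h => causal_of_max hIc hf hmin hbd hp' hq' h)
      hch, rfl⟩
  have hSfSfmin : ∀ r ∈ NDSet I f p q, r ∈ NDSet I (fun _ => fmin) p q := by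
    rintro r ⟨n, σ, hch, rfl⟩
    exact ⟨n, σ, chain_trans (fun p' q' hp' hq' h => causal_to_min hIc hmin hbd hp' hq' h)
      hch, rfl⟩
  have hS1ne : (NDSet I (fun _ => (1:ℝ)) p q).Nonempty := by
    obtain ⟨r, hr, -⟩ := UB 1 one_pos 1 one_pos
    exact ⟨r, hr⟩
  have hSfne : (NDSet I f p q).Nonempty := by
    obtain ⟨r, hr, -⟩ := UB fmax hfmax 1 one_pos
    exact ⟨r, hSfmaxSf r hr⟩
  have hA1 : max T d ≤ nullDist I (fun _ => (1:ℝ)) p q := by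
    rw [nullDist_eq]
    refine le_csInf hS1ne fun r hr => ?_
    have := LB 1 one_pos r hr
    rwa [one_mul] at this
  have hA2 : nullDist I (fun _ => (1:ℝ)) p q ≤ max T d := by
    rw [nullDist_eq]
    refine le_of_forall_pos_le_add fun ε hε => ?_
    obtain ⟨r, hr, hrle⟩ := UB 1 one_pos ε hε
    rw [one_mul] at hrle
    exact (csInf_le (ndset_bdd _ _ _ _) hr).trans hrle
  have hB1 : max T (fmin * d) ≤ nullDist I f p q := by
    rw [nullDist_eq]
    exact le_csInf hSfne fun r hr => LB fmin hmin r (hSfSfmin r hr)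
  have hB2 : nullDist I f p q ≤ max T (fmax * d) := by
    rw [nullDist_eq]
    refine le_of_forall_pos_le_add fun ε hε => ?_
    obtain ⟨r, hr, hrle⟩ := UB fmax hfmax ε hε
    exact (csInf_le (ndset_bdd _ _ _ _) (hSfmaxSf r hr)).trans hrle
  have hmin1 : 0 < min 1 fmin := lt_min one_pos hmin
  have hmax1 : (1:ℝ) ≤ max 1 fmax := le_max_left _ _
  constructor
  · calc min 1 fmin * nullDist I (fun _ => (1:ℝ)) p q
        ≤ min 1 fmin * max T d := mul_le_mul_of_nonneg_left hA2 hmin1.le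
      _ ≤ max T (fmin * d) := by
          rcases max_cases T d with ⟨h1, h2⟩ | ⟨h1, h2⟩
          · rw [h1]
            calc min 1 fmin * T ≤ 1 * T := by
                  apply mul_le_mul_of_nonneg_right (min_le_left _ _) hT0
              _ = T := one_mul T
              _ ≤ max T (fmin * d) := le_max_left _ _
          · rw [h1]
            calc min 1 fmin * d ≤ fmin * d := by
                  apply mul_le_mul_of_nonneg_right (min_le_right _ _) hd0
              _ ≤ max T (fmin * d) := le_max_right _ _
      _ ≤ nullDist I f p q := hB1
  · calc nullDist I f p q ≤ max T (fmax * d) := hB2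
      _ ≤ max 1 fmax * max T d := by
          apply max_le
          · calc T = 1 * T := (one_mul T).symm
              _ ≤ max 1 fmax * max T d := by
                  apply mul_le_mul hmax1 (le_max_left _ _) hT0 (by linarith)
          · apply mul_le_mul (le_max_right _ _) (le_max_right _ _) hd0 (by linarith)
      _ ≤ max 1 fmax * nullDist I (fun _ => (1:ℝ)) p q :=
          mul_le_mul_of_nonneg_left hA1 (by linarith)
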